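/- For n=3 and two sets of variables x=(x^(1),x^(2),x^(3)), y=(y^(1),y^(2),y^(3)), the rational map s defined by s(x^(i)) = y^(i+1) \kappa_{i+1}(x,y)/\kappa_i(x,y) and s(y^(i)) = x^(i-1) \kappa_{i-1}(x,y)/\kappa_i(x,y) fixes e_1^(1) = x^(1) + y^(1): that is, s(x^(1)) + s(y^(1)) = x^(1) + y^(1), assuming all \kappa_i(x,y) are nonzero. -/

import Mathlib

/-- For `n = 3`, the birational map `s` fixes `e_1^{(1)} = x^{(1)} + y^{(1)}`:
`s(x^{(1)}) + s(y^{(1)}) = x^{(1)} + y^{(1)}`, where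
`s(x^{(1)}) = y^{(2)} κ₂/κ₁` and `s(y^{(1)}) = x^{(3)} κ₃/κ₁`. -/
theorem s_fixes_e1 {F : Type*} [Field F] (x1 x2 x3 y1 y2 y3 : F)
    (κ1 κ2 κ3 : F)
    (hκ1def : κ1 = x2 * x3 + y2 * x3 + y2 * y3)
    (hκ2def : κ2 = x3 * x1 + y3 * x1 + y3 * y1)
    (hκ3def : κ3 = x1 * x2 + y1 * x2 + y1 * y2)
    (h1 : κ1 ≠ 0) (h2 : κ2 ≠ 0) (h3 : κ3 ≠ 0) :
    y2 * (κ2 / κ1) + x3 * (κ3 / κ1) = x1 + y1 := by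
  subst hκ1def hκ2def hκ3def
  rw [← mul_div_assoc, ← mul_div_assoc, ← add_div, div_eq_iff h1]
  ring
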